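/- arXiv:1009.1254 — 7 statements merged into one kernel-verified Lean document; each statement's English description precedes it below -/
import Mathlib

section
/- Let v_1, …, v_k be vectors in 𝔽_q^M, let V := span{v_1, …, v_k} with dim V ≥ 1, and let α_1, …, α_k be independent random variables each uniformly distributed on 𝔽_q, with v := Σ_{j=1}^k α_j v_j. Let {b_1, …, b_M} be a basis of 𝔽_q^M such that b_1, …, b_K ∈ V for some 1 ≤ K ≤ M. Then the probability that {v, b_2, …, b_M} is a basis of 𝔽_q^M is at least 1 − 1/q; equivalently, the number of tuples (a_1, …, a_k) ∈ 𝔽_q^k for which {Σ_{j=1}^k a_j v_j, b_2, …, b_M} is a basis of 𝔽_q^M is at least (1 − 1/q) q^k. -/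
open Finset

/-- With `V = span{v_1,…,v_k}` of dimension at least 1 and a basis
`{b_1,…,b_M}` of `𝔽_q^M` such that `b_1,…,b_K ∈ V` (`1 ≤ K ≤ M`), the number
of coefficient tuples `(a_1,…,a_k) ∈ 𝔽_q^k` for which
`{∑_j a_j v_j, b_2, …, b_M}` is a basis of `𝔽_q^M` is at least `(1 − 1/q) q^k`;
i.e. a uniformly random combination yields a basis with probability ≥ `1 − 1/q`. -/
theorem stmt_8 {F : Type*} [Field F] [Fintype F] {M k : ℕ} (hM : 0 < M)
    (v : Fin k → (Fin M → F))
    (hV : 1 ≤ Module.finrank F (Submodule.span F (Set.range v)))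
    (b : Fin M → (Fin M → F))
    (hb : LinearIndependent F b ∧ Submodule.span F (Set.range b) = ⊤)
    (K : ℕ) (hK1 : 1 ≤ K) (hKM : K ≤ M)
    (hbV : ∀ i : Fin M, (i : ℕ) < K → b i ∈ Submodule.span F (Set.range v)) :
    ((1 : ℝ) - 1 / Fintype.card F) * (Fintype.card F : ℝ) ^ k
      ≤ Nat.card {a : Fin k → F //
          LinearIndependent F (Function.update b ⟨0, hM⟩ (∑ j, a j • v j))
          ∧ Submodule.span F
              (Set.range (Function.update b ⟨0, hM⟩ (∑ j, a j • v j))) = ⊤} := by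
  classical
  set q := Fintype.card F with hq
  have hq1 : 1 ≤ q := Fintype.card_pos
  set e0 : Fin M := ⟨0, hM⟩ with he0
  set φ : (Fin k → F) →ₗ[F] (Fin M → F) := Fintype.linearCombination F v with hφ
  set W : Submodule F (Fin M → F) := Submodule.span F (b '' {i | i ≠ e0}) with hW
  have hbW : b e0 ∉ W := hb.1.notMem_span_image (by simp)
  have hrange : b e0 ∈ LinearMap.range φ := by
    rw [hφ, Fintype.range_linearCombination]
    exact hbV e0 (by rw [he0]; exact hK1)
  obtain ⟨a0, ha0⟩ := hrange
  set S : Submodule F (Fin k → F) := W.comap φ with hS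
  have hSne : a0 ∉ S := fun h => hbW (by simpa [hS, ha0] using h)
  have hSlt : S < ⊤ := lt_top_iff_ne_top.2 fun h => hSne (h ▸ Submodule.mem_top)
  have hk1 : 1 ≤ k := by
    rcases Nat.eq_zero_or_pos k with hk | hk
    · subst hk
      rw [Set.range_eq_empty, Submodule.span_empty] at hV
      simpa using hV
    · exact hk
  -- finrank of W is M - 1
  have hliW : LinearIndependent F (b ∘ (Subtype.val : {i // i ≠ e0} → Fin M)) :=
    hb.1.comp _ Subtype.val_injective
  have hrangeW : Set.range (b ∘ (Subtype.val : {i // i ≠ e0} → Fin M)) = b '' {i | i ≠ e0} := by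
    rw [Set.range_comp]
    congr 1
    ext i
    simp
  have hcardsub : Fintype.card {i // i ≠ e0} = M - 1 := by
    have := Fintype.card_subtype_compl (fun i : Fin M => i = e0)
    simpa [Fintype.card_subtype_eq] using this
  have hfinW : Module.finrank F W = M - 1 := by
    rw [hW, ← hrangeW, finrank_span_eq_card hliW, hcardsub]
  -- key claim
  have key : ∀ c : Fin M → F, c ∉ W →
      LinearIndependent F (Function.update b e0 c) ∧
      Submodule.span F (Set.range (Function.update b e0 c)) = ⊤ := by
    intro c hc
    have hrangeu : Set.range (Function.update b e0 c) = insert c (b '' {i | i ≠ e0}) := by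
      ext x
      constructor
      · rintro ⟨i, rfl⟩
        by_cases hi : i = e0
        · subst hi; simp [Function.update_self]
        · right; exact ⟨i, hi, by simp [Function.update_of_ne hi]⟩
      · rintro (rfl | ⟨i, hi, rfl⟩)
        · exact ⟨e0, by simp⟩
        · exact ⟨i, by simp [Function.update_of_ne hi]⟩
    have hspan : Submodule.span F (Set.range (Function.update b e0 c)) =
        Submodule.span F {c} ⊔ W := by
      rw [hrangeu, Set.insert_eq, Submodule.span_union]
    have hWlt : W < Submodule.span F {c} ⊔ W := by
      refine lt_of_le_of_ne le_sup_right fun h => hc ?_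
      rw [h]
      exact Submodule.mem_sup_left (Submodule.mem_span_singleton_self c)
    have h1 : Module.finrank F W < Module.finrank F ↥(Submodule.span F {c} ⊔ W) :=
      Submodule.finrank_lt_finrank_of_lt hWlt
    have h2 : Module.finrank F ↥(Submodule.span F {c} ⊔ W) ≤ M := by
      simpa [Module.finrank_pi] using Submodule.finrank_le (Submodule.span F {c} ⊔ W)
    have hfin : Module.finrank F ↥(Submodule.span F {c} ⊔ W) = M := by omega
    have htop : Submodule.span F (Set.range (Function.update b e0 c)) = ⊤ := by
      rw [hspan]
      exact Submodule.eq_top_of_finrank_eq (by rw [hfin, Module.finrank_pi]; simp)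
    refine ⟨?_, htop⟩
    exact linearIndependent_of_top_le_span_of_card_eq_finrank htop.ge
      (by simp [Module.finrank_pi])
  -- counting
  haveI : Fintype S := Fintype.ofFinite S
  have hfinS : Module.finrank F S < k := by
    have := Submodule.finrank_lt (K := F) (V := Fin k → F) hSlt.ne
    simpa [Module.finrank_pi] using this
  have hcardS : Fintype.card S ≤ q ^ (k - 1) := by
    rw [Module.card_eq_pow_finrank (K := F) (V := S)]
    exact Nat.pow_le_pow_right hq1 (by omega)
  have hcardmem : Fintype.card {a : Fin k → F // φ a ∈ W} = Fintype.card S :=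
    Fintype.card_congr (Equiv.subtypeEquivRight (by simp [hS]))
  have hcompl : Fintype.card {a : Fin k → F // φ a ∉ W} =
      q ^ k - Fintype.card {a : Fin k → F // φ a ∈ W} := by
    rw [Fintype.card_subtype_compl, Fintype.card_fun, Fintype.card_fin]
  have hNbig : q ^ k - q ^ (k - 1) ≤ Fintype.card {a : Fin k → F // φ a ∉ W} := by
    rw [hcompl, hcardmem]
    exact Nat.sub_le_sub_left hcardS _
  have hinj : Fintype.card {a : Fin k → F // φ a ∉ W} ≤
      Nat.card {a : Fin k → F //
          LinearIndependent F (Function.update b e0 (∑ j, a j • v j))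
          ∧ Submodule.span F
              (Set.range (Function.update b e0 (∑ j, a j • v j))) = ⊤} := by
    haveI : Fintype {a : Fin k → F //
          LinearIndependent F (Function.update b e0 (∑ j, a j • v j))
          ∧ Submodule.span F
              (Set.range (Function.update b e0 (∑ j, a j • v j))) = ⊤} := Fintype.ofFinite _
    rw [Nat.card_eq_fintype_card]
    refine Fintype.card_le_of_injective (fun x => ⟨x.1, ?_⟩) ?_
    · have := key (φ x.1) x.2
      simpa [φ, Fintype.linearCombination_apply] using this
    · intro x y h
      have h' := congrArg Subtype.val h
      exact Subtype.ext h'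
  have hN : q ^ k - q ^ (k - 1) ≤ Nat.card {a : Fin k → F //
          LinearIndependent F (Function.update b e0 (∑ j, a j • v j))
          ∧ Submodule.span F
              (Set.range (Function.update b e0 (∑ j, a j • v j))) = ⊤} :=
    le_trans hNbig hinj
  -- real arithmetic
  have hqR : (0 : ℝ) < q := by exact_mod_cast hq1
  have hpow : (q : ℝ) ^ (k - 1) * q = (q : ℝ) ^ k := by
    have hk : k - 1 + 1 = k := Nat.succ_pred_eq_of_pos hk1
    calc (q : ℝ) ^ (k - 1) * q = (q : ℝ) ^ (k - 1 + 1) := (pow_succ _ _).symm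
      _ = (q : ℝ) ^ k := by rw [hk]
  have heq : ((1 : ℝ) - 1 / q) * (q : ℝ) ^ k = (q : ℝ) ^ k - (q : ℝ) ^ (k - 1) := by
    field_simp
    linarith [hpow]
  have hle' : (q : ℝ) ^ k - (q : ℝ) ^ (k - 1) ≤
      ((q ^ k - q ^ (k - 1) : ℕ) : ℝ) := by
    have : q ^ (k - 1) ≤ q ^ k := Nat.pow_le_pow_right hq1 (Nat.sub_le k 1)
    rw [Nat.cast_sub this]
    push_cast
    exact le_rfl
  calc ((1 : ℝ) - 1 / q) * (q : ℝ) ^ k = (q : ℝ) ^ k - (q : ℝ) ^ (k - 1) := heq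
    _ ≤ ((q ^ k - q ^ (k - 1) : ℕ) : ℝ) := hle'
    _ ≤ _ := by exact_mod_cast hN
end

section
/- Let S be a finite set, let ε_i ∈ [0,1] for each i ∈ S, and let α_1, α_2 be reals with 0 ≤ α_1 < 1 and 0 ≤ α_2 < 1. Then Σ_{H ⊆ S} (−1)^{|H|} (∏_{i∈H} ε_i)^2 / ((1 − α_1 ∏_{i∈H} ε_i)(1 − α_2 ∏_{i∈H} ε_i)) ≥ 0, where the sum ranges over all subsets H of S and the empty product equals 1. -/
open Finset

private lemma summable_aux {x α₁ α₂ : ℝ} (hx0 : 0 ≤ x) (hx1 : x ≤ 1)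
    (hα₁0 : 0 ≤ α₁) (hα₁1 : α₁ < 1) (hα₂0 : 0 ≤ α₂) (hα₂1 : α₂ < 1) :
    Summable (fun q : ℕ × ℕ => α₁ ^ q.1 * α₂ ^ q.2 * x ^ (q.1 + q.2 + 2)) := by
  have h1 : α₁ * x < 1 := lt_of_le_of_lt (by nlinarith) hα₁1
  have h2 : α₂ * x < 1 := lt_of_le_of_lt (by nlinarith) hα₂1
  have h1' : 0 ≤ α₁ * x := mul_nonneg hα₁0 hx0
  have h2' : 0 ≤ α₂ * x := mul_nonneg hα₂0 hx0
  have hf : Summable (fun m : ℕ => (α₁ * x) ^ m) := summable_geometric_of_lt_one h1' h1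
  have hg : Summable (fun n : ℕ => (α₂ * x) ^ n * x ^ 2) :=
    (summable_geometric_of_lt_one h2' h2).mul_right _
  have := hf.mul_of_nonneg hg (fun m => pow_nonneg h1' m)
    (fun n => mul_nonneg (pow_nonneg h2' n) (pow_nonneg hx0 2))
  refine this.congr fun q => ?_
  simp only [mul_pow]
  ring

private lemma expand_aux {x α₁ α₂ : ℝ} (hx0 : 0 ≤ x) (hx1 : x ≤ 1)
    (hα₁0 : 0 ≤ α₁) (hα₁1 : α₁ < 1) (hα₂0 : 0 ≤ α₂) (hα₂1 : α₂ < 1) :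
    x ^ 2 / ((1 - α₁ * x) * (1 - α₂ * x))
      = ∑' q : ℕ × ℕ, α₁ ^ q.1 * α₂ ^ q.2 * x ^ (q.1 + q.2 + 2) := by
  have h1 : α₁ * x < 1 := lt_of_le_of_lt (by nlinarith) hα₁1
  have h2 : α₂ * x < 1 := lt_of_le_of_lt (by nlinarith) hα₂1
  have h1' : 0 ≤ α₁ * x := mul_nonneg hα₁0 hx0
  have h2' : 0 ≤ α₂ * x := mul_nonneg hα₂0 hx0
  have hf : Summable (fun m : ℕ => (α₁ * x) ^ m) := summable_geometric_of_lt_one h1' h1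
  have hg : Summable (fun n : ℕ => (α₂ * x) ^ n) := summable_geometric_of_lt_one h2' h2
  have hfg : Summable (fun q : ℕ × ℕ => (α₁ * x) ^ q.1 * (α₂ * x) ^ q.2) :=
    hf.mul_of_nonneg hg (fun m => pow_nonneg h1' m) (fun n => pow_nonneg h2' n)
  have key : ((1 - α₁ * x)⁻¹ * (1 - α₂ * x)⁻¹)
      = ∑' q : ℕ × ℕ, (α₁ * x) ^ q.1 * (α₂ * x) ^ q.2 := by
    rw [← tsum_geometric_of_lt_one h1' h1, ← tsum_geometric_of_lt_one h2' h2]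
    exact Summable.tsum_mul_tsum hf hg hfg
  have : x ^ 2 / ((1 - α₁ * x) * (1 - α₂ * x))
      = x ^ 2 * ((1 - α₁ * x)⁻¹ * (1 - α₂ * x)⁻¹) := by
    rw [div_eq_mul_inv, mul_inv]
  rw [this, key, ← tsum_mul_left]
  refine tsum_congr fun q => ?_
  simp only [mul_pow]
  ring

/-- Non-negativity of the alternating sum
`∑_{H ⊆ S} (−1)^{|H|} (∏_{i∈H} ε_i)^2 / ((1 − α₁ ∏_{i∈H} ε_i)(1 − α₂ ∏_{i∈H} ε_i))`
for `ε_i ∈ [0,1]` and `0 ≤ α₁, α₂ < 1`. -/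
theorem stmt_10 {ι : Type*} [DecidableEq ι] (S : Finset ι) (ε : ι → ℝ)
    (hε0 : ∀ i ∈ S, 0 ≤ ε i) (hε1 : ∀ i ∈ S, ε i ≤ 1)
    (α₁ α₂ : ℝ) (hα₁0 : 0 ≤ α₁) (hα₁1 : α₁ < 1) (hα₂0 : 0 ≤ α₂) (hα₂1 : α₂ < 1) :
    0 ≤ ∑ H ∈ S.powerset,
        (-1 : ℝ) ^ H.card * (∏ i ∈ H, ε i) ^ 2
          / ((1 - α₁ * ∏ i ∈ H, ε i) * (1 - α₂ * ∏ i ∈ H, ε i)) := by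
  have hp0 : ∀ H ∈ S.powerset, 0 ≤ ∏ i ∈ H, ε i := by
    intro H hH
    rw [mem_powerset] at hH
    exact prod_nonneg fun i hi => hε0 i (hH hi)
  have hp1 : ∀ H ∈ S.powerset, ∏ i ∈ H, ε i ≤ 1 := by
    intro H hH
    rw [mem_powerset] at hH
    exact prod_le_one (fun i hi => hε0 i (hH hi)) (fun i hi => hε1 i (hH hi))
  have hrw : ∀ H ∈ S.powerset,
      (-1 : ℝ) ^ H.card * (∏ i ∈ H, ε i) ^ 2
          / ((1 - α₁ * ∏ i ∈ H, ε i) * (1 - α₂ * ∏ i ∈ H, ε i))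
      = ∑' q : ℕ × ℕ, (-1 : ℝ) ^ H.card *
          (α₁ ^ q.1 * α₂ ^ q.2 * (∏ i ∈ H, ε i) ^ (q.1 + q.2 + 2)) := by
    intro H hH
    rw [tsum_mul_left, mul_div_assoc,
      expand_aux (hp0 H hH) (hp1 H hH) hα₁0 hα₁1 hα₂0 hα₂1]
  rw [Finset.sum_congr rfl hrw, ← Summable.tsum_finsetSum (fun H hH =>
    ((summable_aux (hp0 H hH) (hp1 H hH) hα₁0 hα₁1 hα₂0 hα₂1).mul_left _))]
  refine tsum_nonneg fun q => ?_
  have key : ∑ H ∈ S.powerset, (-1 : ℝ) ^ H.card *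
      (α₁ ^ q.1 * α₂ ^ q.2 * (∏ i ∈ H, ε i) ^ (q.1 + q.2 + 2))
      = α₁ ^ q.1 * α₂ ^ q.2 * ∏ i ∈ S, (1 - ε i ^ (q.1 + q.2 + 2)) := by
    have prodrw : (∏ i ∈ S, (1 - ε i ^ (q.1 + q.2 + 2)))
        = ∑ H ∈ S.powerset, (-1 : ℝ) ^ H.card * (∏ i ∈ H, ε i) ^ (q.1 + q.2 + 2) := by
      have := Finset.prod_add (fun i => -(ε i ^ (q.1 + q.2 + 2))) (fun _ => (1 : ℝ)) S
      rw [show (∏ i ∈ S, (1 - ε i ^ (q.1 + q.2 + 2)))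
          = ∏ i ∈ S, (-(ε i ^ (q.1 + q.2 + 2)) + 1) from
        Finset.prod_congr rfl fun i _ => by ring, this]
      refine Finset.sum_congr rfl fun H hH => ?_
      rw [Finset.prod_const_one, mul_one, show (fun i => -(ε i ^ (q.1 + q.2 + 2)))
          = fun i => (-1 : ℝ) * ε i ^ (q.1 + q.2 + 2) from funext fun i => by ring,
        Finset.prod_mul_distrib, Finset.prod_const, Finset.prod_pow]
    rw [prodrw, Finset.mul_sum]
    exact Finset.sum_congr rfl fun H _ => by ring
  rw [key]
  refine mul_nonneg (mul_nonneg (pow_nonneg hα₁0 _) (pow_nonneg hα₂0 _)) ?_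
  refine Finset.prod_nonneg fun i hi => ?_
  have : ε i ^ (q.1 + q.2 + 2) ≤ 1 := pow_le_one₀ (hε0 i hi) (hε1 i hi)
  linarith
end

section
/- Fix i ∈ 𝒩 and suppose the numbers g^i_S, defined for all subsets S ⊆ 𝒩 with i ∈ S, satisfy the initial condition g^i_{{i}} = 1/(1 − ε_𝒩) and the recursion g^i_S = (1/(1 − ε_{𝒩∖(S∖{i})})) · Σ_{I : {i} ⊆ I ⊊ S} g^i_I · p_{𝒩∖(S∖{i}), S∖I} for every S with i ∈ S and |S| ≥ 2, where p_{S,G} := Σ_{H ⊆ G} (−1)^{|H|} ε_{S∪H}. Then for every S ⊆ 𝒩 with i ∈ S, g^i_S = f^i_S = Σ_{H ⊆ S∖{i}} (−1)^{|H|} / (1 − ε_{(𝒩∖(S∖{i})) ∪ H}). -/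
open Finset

/-- The explicit formula `f^i_S := ∑_{H ⊆ S∖{i}} (−1)^{|H|} / (1 − ε_{(𝒩∖(S∖{i}))∪H})`. -/
noncomputable def fcoef {N : Type*} [Fintype N] [DecidableEq N]
    (ε : Finset N → ℝ) (i : N) (S : Finset N) : ℝ :=
  ∑ H ∈ (S.erase i).powerset, (-1 : ℝ) ^ H.card / (1 - ε ((S.erase i)ᶜ ∪ H))

/-- The quantity `p_{S,G} := ∑_{H ⊆ G} (−1)^{|H|} ε_{S∪H}`. -/
noncomputable def pcoef {N : Type*} [Fintype N] [DecidableEq N]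
    (ε : Finset N → ℝ) (S G : Finset N) : ℝ :=
  ∑ H ∈ G.powerset, (-1 : ℝ) ^ H.card * ε (S ∪ H)

section Aux

set_option linter.unusedSectionVars false

variable {N : Type*} [Fintype N] [DecidableEq N]

lemma neg_one_pow_mul_self (n : ℕ) : (-1:ℝ)^n * (-1)^n = 1 := by
  rw [← pow_add, ← two_mul, pow_mul]; norm_num

lemma alt_sum (B : Finset N) :
    ∑ E ∈ B.powerset, (-1:ℝ)^E.card = if B = ∅ then 1 else 0 := by
  have h := Finset.sum_powerset_neg_one_pow_card (x := B)
  calc ∑ E ∈ B.powerset, (-1:ℝ)^E.card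
      = ((∑ E ∈ B.powerset, (-1:ℤ)^E.card : ℤ) : ℝ) := by push_cast; rfl
    _ = _ := by rw [h]; split <;> norm_num

lemma neg_pow_sdiff (M D : Finset N) (h : D ⊆ M) :
    ((-1:ℝ))^((M \ D).card) = (-1)^M.card * (-1)^D.card := by
  have hc : (M \ D).card + D.card = M.card := by
    rw [Finset.card_sdiff_of_subset h, Nat.sub_add_cancel (Finset.card_le_card h)]
  have h1 : ((-1:ℝ))^M.card = (-1)^((M\D).card) * (-1)^D.card := by
    rw [← pow_add, hc]
  rw [h1, mul_assoc, neg_one_pow_mul_self, mul_one]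

lemma interval_sum (M H : Finset N) (hHM : H ⊆ M) :
    ∑ D ∈ M.powerset.filter (fun D => H ⊆ D), (-1:ℝ)^D.card
      = if H = M then (-1:ℝ)^M.card else 0 := by
  have key : ∑ D ∈ M.powerset.filter (fun D => H ⊆ D), (-1:ℝ)^D.card
      = ∑ E ∈ (M \ H).powerset, (-1:ℝ)^H.card * (-1:ℝ)^E.card := by
    refine Finset.sum_nbij' (fun D => D \ H) (fun E => H ∪ E) ?_ ?_ ?_ ?_ ?_
    · intro D hD
      simp only [mem_filter, mem_powerset] at hD
      exact mem_powerset.2 (sdiff_subset_sdiff hD.1 (Finset.Subset.refl H))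
    · intro E hE
      simp only [mem_powerset] at hE
      refine mem_filter.2 ⟨mem_powerset.2 ?_, Finset.subset_union_left⟩
      exact union_subset hHM (hE.trans sdiff_subset)
    · intro D hD
      simp only [mem_filter, mem_powerset] at hD
      exact union_sdiff_of_subset hD.2
    · intro E hE
      simp only [mem_powerset] at hE
      have hdisj : Disjoint H E :=
        (disjoint_sdiff_self_right : Disjoint H (M \ H)).mono_right hE
      exact union_sdiff_cancel_left hdisj
    · intro D hD
      simp only [mem_filter, mem_powerset] at hD
      rw [neg_pow_sdiff D H hD.2, ← mul_assoc, mul_comm ((-1:ℝ)^H.card),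
        mul_assoc, neg_one_pow_mul_self, mul_one]
  rw [key, ← Finset.mul_sum, alt_sum]
  have hiff : M \ H = ∅ ↔ H = M := by
    rw [sdiff_eq_empty_iff_subset]
    exact ⟨fun h => Finset.Subset.antisymm hHM h, fun h => h ▸ Finset.Subset.refl M⟩
  by_cases h : H = M
  · rw [if_pos (hiff.2 h), if_pos h, h, mul_one]
  · rw [if_neg (fun c => h (hiff.1 c)), if_neg h, mul_zero]

lemma s_lemma (M H : Finset N) (hHM : H ⊆ M) :
    ∑ D ∈ M.powerset.filter (fun D => H ⊆ D ∧ D ≠ ∅), (-1:ℝ)^((M \ D).card)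
      = (if H = M then 1 else 0) - (if H = ∅ then (-1:ℝ)^M.card else 0) := by
  have hconv : ∀ D ∈ M.powerset.filter (fun D => H ⊆ D), (-1:ℝ)^((M\D).card)
      = (-1:ℝ)^M.card * (-1:ℝ)^D.card := by
    intro D hD
    simp only [mem_filter, mem_powerset] at hD
    exact neg_pow_sdiff M D hD.1
  have hfull : ∑ D ∈ M.powerset.filter (fun D => H ⊆ D), (-1:ℝ)^((M\D).card)
      = (-1:ℝ)^M.card * (if H = M then (-1:ℝ)^M.card else 0) := by
    rw [Finset.sum_congr rfl hconv, ← Finset.mul_sum, interval_sum M H hHM]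
  by_cases hH : H = ∅
  · subst hH
    have hset : M.powerset.filter (fun D => (∅:Finset N) ⊆ D ∧ D ≠ ∅)
        = (M.powerset.filter (fun D => (∅:Finset N) ⊆ D)).erase ∅ := by
      ext D
      simp only [mem_filter, mem_erase, mem_powerset, empty_subset, true_and]
      tauto
    have hmem : (∅ : Finset N) ∈ M.powerset.filter (fun D => (∅:Finset N) ⊆ D) := by
      simp
    rw [hset, Finset.sum_erase_eq_sub hmem, hfull]
    simp only [sdiff_empty, if_pos rfl]
    by_cases hM : (∅ : Finset N) = M
    · rw [if_pos hM, ← hM]; norm_num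
    · rw [if_neg hM, mul_zero]
      simp [hM]
  · have hset : M.powerset.filter (fun D => H ⊆ D ∧ D ≠ ∅)
        = M.powerset.filter (fun D => H ⊆ D) := by
      apply Finset.filter_congr
      intro D _
      simp only [and_iff_left_iff_imp]
      intro hHD hDe
      exact hH (Finset.subset_empty.1 (hDe ▸ hHD))
    rw [hset, hfull, if_neg hH, sub_zero]
    by_cases h : H = M
    · rw [if_pos h, if_pos h, neg_one_pow_mul_self]
    · rw [if_neg h, if_neg h, mul_zero]

lemma inner_identity (ε : Finset N → ℝ) (A M : Finset N) :
    ∑ D ∈ M.powerset.filter (fun D => D ≠ ∅), ∑ H ∈ D.powerset,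
        (-1:ℝ)^((M\D).card) * ((-1:ℝ)^H.card * ε (A ∪ H))
      = (-1:ℝ)^M.card * (ε (A ∪ M) - ε A) := by
  rw [Finset.sum_comm' (s' := fun H => M.powerset.filter (fun D => H ⊆ D ∧ D ≠ ∅))
      (t' := M.powerset) (by
        intro D H
        simp only [mem_filter, mem_powerset]
        constructor
        · rintro ⟨⟨hDM, hDne⟩, hHD⟩
          exact ⟨⟨hDM, hHD, hDne⟩, hHD.trans hDM⟩
        · rintro ⟨⟨hDM, hHD, hDne⟩, _⟩
          exact ⟨⟨hDM, hDne⟩, hHD⟩)]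
  have step : ∀ H ∈ M.powerset,
      ∑ D ∈ M.powerset.filter (fun D => H ⊆ D ∧ D ≠ ∅),
          (-1:ℝ)^((M\D).card) * ((-1:ℝ)^H.card * ε (A ∪ H))
      = ((if H = M then 1 else 0) - (if H = ∅ then (-1:ℝ)^M.card else 0))
          * ((-1:ℝ)^H.card * ε (A ∪ H)) := by
    intro H hH
    rw [← Finset.sum_mul, s_lemma M H (mem_powerset.1 hH)]
  rw [Finset.sum_congr rfl step]
  simp only [sub_mul, ite_mul, one_mul, zero_mul]
  rw [Finset.sum_sub_distrib, Finset.sum_ite_eq' M.powerset M, Finset.sum_ite_eq' M.powerset ∅]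
  simp only [mem_powerset, Finset.Subset.refl, empty_subset, if_pos]
  simp only [card_empty, pow_zero, one_mul, union_empty]
  ring

lemma key_identity (ε : Finset N → ℝ) (hε : ∀ I, ε I ≠ 1) (i : N) (S : Finset N)
    (hi : i ∈ S) (h2 : 2 ≤ S.card) :
    ∑ I ∈ S.powerset.filter (fun I => i ∈ I ∧ I ≠ S),
        fcoef ε i I * pcoef ε (S.erase i)ᶜ (S \ I)
      = (1 - ε (S.erase i)ᶜ) * fcoef ε i S := by
  set T := S.erase i with hT
  set A := Tᶜ with hA
  have hiT : i ∉ T := notMem_erase i S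
  have hTne : T ≠ ∅ := by
    have : 1 ≤ T.card := by rw [hT, card_erase_of_mem hi]; omega
    intro h; rw [h] at this; simp at this
  have hz : ∀ B : Finset N, (1 : ℝ) - ε B ≠ 0 :=
    fun B => sub_ne_zero_of_ne (fun h => hε B h.symm)
  -- Step 1: reindex I ↦ S \ I
  have step1 : ∑ I ∈ S.powerset.filter (fun I => i ∈ I ∧ I ≠ S),
        fcoef ε i I * pcoef ε A (S \ I)
      = ∑ D ∈ T.powerset.filter (fun D => D ≠ ∅), fcoef ε i (S \ D) * pcoef ε A D := by
    refine Finset.sum_nbij' (fun I => S \ I) (fun D => S \ D) ?_ ?_ ?_ ?_ ?_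
    · intro I hI
      simp only [mem_filter, mem_powerset] at hI ⊢
      obtain ⟨hIS, hiI, hne⟩ := hI
      constructor
      · intro x hx
        simp only [mem_sdiff] at hx
        rw [hT, mem_erase]
        exact ⟨fun h => hx.2 (h ▸ hiI), hx.1⟩
      · intro h
        exact hne (Finset.Subset.antisymm hIS (sdiff_eq_empty_iff_subset.1 h))
    · intro D hD
      simp only [mem_filter, mem_powerset] at hD ⊢
      obtain ⟨hDT, hDne⟩ := hD
      refine ⟨sdiff_subset, ?_, ?_⟩
      · simp only [mem_sdiff]
        exact ⟨hi, fun h => hiT (hDT h)⟩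
      · intro h
        obtain ⟨d, hd⟩ := nonempty_iff_ne_empty.2 hDne
        have : d ∈ S := (hDT.trans (erase_subset i S)) hd
        rw [← h] at this
        simp only [mem_sdiff] at this
        exact this.2 hd
    · intro I hI
      simp only [mem_filter, mem_powerset] at hI
      exact Finset.sdiff_sdiff_eq_self hI.1
    · intro D hD
      simp only [mem_filter, mem_powerset] at hD
      exact Finset.sdiff_sdiff_eq_self (hD.1.trans (erase_subset i S))
    · intro I hI
      simp only [mem_filter, mem_powerset] at hI
      rw [Finset.sdiff_sdiff_eq_self hI.1]
  rw [step1]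
  -- Step 2: expand each term
  have step2 : ∀ D ∈ T.powerset.filter (fun D => D ≠ ∅),
      fcoef ε i (S \ D) * pcoef ε A D
        = ∑ K ∈ (T \ D).powerset, ∑ H ∈ D.powerset,
            ((-1:ℝ)^K.card / (1 - ε (A ∪ (D ∪ K)))) * ((-1:ℝ)^H.card * ε (A ∪ H)) := by
    intro D hD
    simp only [mem_filter, mem_powerset] at hD
    have h1 : (S \ D).erase i = T \ D := by
      rw [hT, erase_sdiff_comm]
    have h2' : (T \ D)ᶜ = A ∪ D := by
      ext x
      simp only [mem_compl, mem_sdiff, hA, mem_union, mem_compl]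
      tauto
    rw [fcoef, pcoef, h1, h2', Finset.sum_mul_sum]
    refine Finset.sum_congr rfl fun K _ => Finset.sum_congr rfl fun H _ => ?_
    rw [union_assoc]
  rw [Finset.sum_congr rfl step2]
  -- Step 3: reindex (D, K) ↦ (M, D) with M = D ∪ K
  have step3 : ∑ D ∈ T.powerset.filter (fun D => D ≠ ∅), ∑ K ∈ (T \ D).powerset,
        ∑ H ∈ D.powerset,
          ((-1:ℝ)^K.card / (1 - ε (A ∪ (D ∪ K)))) * ((-1:ℝ)^H.card * ε (A ∪ H))
      = ∑ M ∈ T.powerset, ∑ D ∈ M.powerset.filter (fun D => D ≠ ∅),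
          ∑ H ∈ D.powerset,
            ((-1:ℝ)^((M \ D).card) / (1 - ε (A ∪ M))) * ((-1:ℝ)^H.card * ε (A ∪ H)) := by
    rw [Finset.sum_sigma' (T.powerset.filter (fun D => D ≠ ∅)) (fun D => (T \ D).powerset),
      Finset.sum_sigma' T.powerset (fun M => M.powerset.filter (fun D => D ≠ ∅))]
    refine Finset.sum_nbij' (fun x => ⟨x.1 ∪ x.2, x.1⟩) (fun y => ⟨y.2, y.1 \ y.2⟩) ?_ ?_ ?_ ?_ ?_
    · rintro ⟨D, K⟩ hx
      simp only [mem_sigma, mem_filter, mem_powerset] at hx ⊢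
      obtain ⟨⟨hDT, hDne⟩, hK⟩ := hx
      exact ⟨union_subset hDT (hK.trans sdiff_subset), Finset.subset_union_left, hDne⟩
    · rintro ⟨M, D⟩ hy
      simp only [mem_sigma, mem_filter, mem_powerset] at hy ⊢
      obtain ⟨hMT, hDM, hDne⟩ := hy
      exact ⟨⟨hDM.trans hMT, hDne⟩, sdiff_subset_sdiff hMT (Finset.Subset.refl D)⟩
    · rintro ⟨D, K⟩ hx
      simp only [mem_sigma, mem_filter, mem_powerset] at hx
      have hdisj : Disjoint D K :=
        (disjoint_sdiff_self_right : Disjoint D (T \ D)).mono_right hx.2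
      simp only [Sigma.mk.inj_iff, heq_eq_eq]
      exact ⟨trivial, union_sdiff_cancel_left hdisj⟩
    · rintro ⟨M, D⟩ hy
      simp only [mem_sigma, mem_filter, mem_powerset] at hy
      simp only [Sigma.mk.inj_iff, heq_eq_eq]
      exact ⟨union_sdiff_of_subset hy.2.1, trivial⟩
    · rintro ⟨D, K⟩ hx
      simp only [mem_sigma, mem_filter, mem_powerset] at hx
      have hdisj : Disjoint D K :=
        (disjoint_sdiff_self_right : Disjoint D (T \ D)).mono_right hx.2
      simp only
      rw [union_sdiff_cancel_left hdisj]
  rw [step3]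
  -- Step 4: evaluate the inner double sum for each M
  have step4 : ∀ M ∈ T.powerset,
      ∑ D ∈ M.powerset.filter (fun D => D ≠ ∅), ∑ H ∈ D.powerset,
          ((-1:ℝ)^((M \ D).card) / (1 - ε (A ∪ M))) * ((-1:ℝ)^H.card * ε (A ∪ H))
      = (1 - ε A) * ((-1:ℝ)^M.card / (1 - ε (A ∪ M))) - (-1:ℝ)^M.card := by
    intro M _
    have : ∑ D ∈ M.powerset.filter (fun D => D ≠ ∅), ∑ H ∈ D.powerset,
          ((-1:ℝ)^((M \ D).card) / (1 - ε (A ∪ M))) * ((-1:ℝ)^H.card * ε (A ∪ H))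
        = (1 / (1 - ε (A ∪ M))) *
          ∑ D ∈ M.powerset.filter (fun D => D ≠ ∅), ∑ H ∈ D.powerset,
            (-1:ℝ)^((M\D).card) * ((-1:ℝ)^H.card * ε (A ∪ H)) := by
      rw [Finset.mul_sum]
      refine Finset.sum_congr rfl fun D _ => ?_
      rw [Finset.mul_sum]
      refine Finset.sum_congr rfl fun H _ => ?_
      ring
    rw [this, inner_identity]
    have hzz : (1:ℝ) - ε (A ∪ M) ≠ 0 := hz _
    field_simp
    ring
  rw [Finset.sum_congr rfl step4, Finset.sum_sub_distrib, alt_sum, if_neg hTne, sub_zero,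
    ← Finset.mul_sum, fcoef]

end Aux

/-- If the numbers `g^i_S` satisfy the initial condition `g^i_{{i}} = 1/(1 − ε_𝒩)`
and the recursion
`g^i_S = (1/(1 − ε_{𝒩∖(S∖{i})})) · ∑_{ {i} ⊆ I ⊊ S } g^i_I · p_{𝒩∖(S∖{i}), S∖I}`
for every `S ∋ i` with `|S| ≥ 2`, then `g^i_S = f^i_S` for every `S ∋ i`. -/
theorem stmt_11 {N : Type*} [Fintype N] [DecidableEq N]
    (ε : Finset N → ℝ) (hε : ∀ I, ε I ≠ 1)
    (i : N) (g : Finset N → ℝ)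
    (hinit : g {i} = 1 / (1 - ε Finset.univ))
    (hrec : ∀ S : Finset N, i ∈ S → 2 ≤ S.card →
      g S = (1 / (1 - ε (S.erase i)ᶜ)) *
        ∑ I ∈ S.powerset.filter (fun I => i ∈ I ∧ I ≠ S),
          g I * pcoef ε (S.erase i)ᶜ (S \ I)) :
    ∀ S : Finset N, i ∈ S → g S = fcoef ε i S := by
  intro S
  induction S using Finset.strongInduction with
  | _ S ih =>
    intro hi
    by_cases h1 : S.card = 1
    · have hS : S = {i} := by
        obtain ⟨a, ha⟩ := card_eq_one.mp h1
        rw [ha] at hi ⊢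
        simp only [mem_singleton] at hi
        rw [hi]
      rw [hS, hinit, fcoef]
      simp
    · have h2 : 2 ≤ S.card := by
        have : 0 < S.card := card_pos.2 ⟨i, hi⟩
        omega
      rw [hrec S hi h2]
      have hsum : ∑ I ∈ S.powerset.filter (fun I => i ∈ I ∧ I ≠ S),
            g I * pcoef ε (S.erase i)ᶜ (S \ I)
          = ∑ I ∈ S.powerset.filter (fun I => i ∈ I ∧ I ≠ S),
            fcoef ε i I * pcoef ε (S.erase i)ᶜ (S \ I) := by
        refine Finset.sum_congr rfl fun I hI => ?_
        simp only [mem_filter, mem_powerset] at hI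
        rw [ih I (Finset.ssubset_iff_subset_ne.mpr ⟨hI.1, hI.2.2⟩) hI.2.1]
      rw [hsum, key_identity ε hε i S hi h2, ← mul_assoc, one_div,
        inv_mul_cancel₀ (sub_ne_zero_of_ne (fun h => hε _ h.symm)), one_mul]
end

section
/- For every subset S ⊆ 𝒩 and every i ∈ S, Σ_{I : i ∈ I ⊆ S} f^i_I = 1/(1 − ε_{𝒩∖(S∖{i})}), where the sum ranges over all subsets I of S containing i. -/
open Finset

/-- For every subset `S ⊆ 𝒩` and every `i ∈ S`,
`∑_{I : i ∈ I ⊆ S} f^i_I = 1/(1 − ε_{𝒩∖(S∖{i})})`. -/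
theorem stmt_12 {N : Type*} [Fintype N] [DecidableEq N]
    (ε : Finset N → ℝ) (hε : ∀ I, ε I ≠ 1)
    (S : Finset N) (i : N) (hi : i ∈ S) :
    ∑ I ∈ S.powerset.filter (fun I => i ∈ I), fcoef ε i I
      = 1 / (1 - ε (S.erase i)ᶜ) := by
  set T := S.erase i with hT
  set g : Finset N → ℝ := fun X => 1 / (1 - ε X) with hg
  -- Step 1: reindex by J = I.erase i
  have step1 : ∑ I ∈ S.powerset.filter (fun I => i ∈ I), fcoef ε i I
      = ∑ J ∈ T.powerset, ∑ H ∈ J.powerset, (-1 : ℝ) ^ H.card * g ((J \ H)ᶜ) := by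
    refine Finset.sum_nbij' (fun I => I.erase i) (fun J => insert i J) ?_ ?_ ?_ ?_ ?_
    · intro I hI
      simp only [mem_filter, mem_powerset] at hI
      exact mem_powerset.2 (erase_subset_erase i hI.1)
    · intro J hJ
      simp only [mem_powerset, hT] at hJ
      simp only [mem_filter, mem_powerset]
      refine ⟨insert_subset hi (hJ.trans (erase_subset _ _)), mem_insert_self _ _⟩
    · intro I hI
      simp only [mem_filter] at hI
      exact insert_erase hI.2
    · intro J hJ
      simp only [mem_powerset, hT] at hJ
      exact erase_insert (fun h => (mem_erase.1 (hJ h)).1 rfl)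
    · intro I hI
      unfold fcoef
      refine Finset.sum_congr rfl fun H hH => ?_
      simp only [mem_powerset] at hH
      have hset : ((I.erase i) \ H)ᶜ = (I.erase i)ᶜ ∪ H := by
        ext x
        simp only [mem_compl, mem_union, mem_sdiff, not_and, not_not]
        tauto
      rw [hg]
      simp only [hset]
      rw [div_eq_mul_one_div]
  rw [step1]
  -- Step 2: reindex pairs (J, H) with H ⊆ J ⊆ T to (K, H) with K ⊆ T, H ⊆ T \ K
  have step2 : ∑ J ∈ T.powerset, ∑ H ∈ J.powerset, (-1 : ℝ) ^ H.card * g ((J \ H)ᶜ)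
      = ∑ K ∈ T.powerset, ∑ H ∈ (T \ K).powerset, (-1 : ℝ) ^ H.card * g (Kᶜ) := by
    rw [Finset.sum_sigma', Finset.sum_sigma']
    refine Finset.sum_nbij' (fun p => ⟨p.1 \ p.2, p.2⟩) (fun p => ⟨p.1 ∪ p.2, p.2⟩) ?_ ?_ ?_ ?_ ?_
    · rintro ⟨J, H⟩ hp
      simp only [mem_sigma, mem_powerset] at hp ⊢
      exact ⟨(sdiff_subset).trans hp.1,
        fun x hx => mem_sdiff.2 ⟨hp.1 (hp.2 hx), fun hx' => (mem_sdiff.1 hx').2 hx⟩⟩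
    · rintro ⟨K, H⟩ hp
      simp only [mem_sigma, mem_powerset] at hp ⊢
      refine ⟨union_subset hp.1 (hp.2.trans sdiff_subset), subset_union_right⟩
    · rintro ⟨J, H⟩ hp
      simp only [mem_sigma, mem_powerset] at hp
      simp [sdiff_union_of_subset hp.2]
    · rintro ⟨K, H⟩ hp
      simp only [mem_sigma, mem_powerset] at hp
      have : Disjoint K H := (sdiff_disjoint.mono_left hp.2).symm
      simp [union_sdiff_cancel_right this]
    · rintro ⟨J, H⟩ hp
      rfl
  rw [step2]
  -- Step 3: inner alternating sum vanishes unless K = T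
  have step3 : ∀ K ∈ T.powerset, ∑ H ∈ (T \ K).powerset, (-1 : ℝ) ^ H.card * g (Kᶜ)
      = if K = T then g Tᶜ else 0 := by
    intro K hK
    rw [← Finset.sum_mul]
    have : ∑ H ∈ (T \ K).powerset, (-1 : ℝ) ^ H.card
        = if T \ K = ∅ then 1 else 0 := by
      have := @Finset.sum_powerset_neg_one_pow_card N _ (T \ K)
      have h2 : ((∑ m ∈ (T \ K).powerset, (-1 : ℤ) ^ m.card : ℤ) : ℝ)
          = ∑ H ∈ (T \ K).powerset, (-1 : ℝ) ^ H.card := by push_cast; rfl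
      rw [← h2, this]
      split <;> simp
    rw [this]
    simp only [mem_powerset] at hK
    by_cases h : K = T
    · subst h; simp
    · rw [if_neg (fun hs => h (subset_antisymm hK (sdiff_eq_empty_iff_subset.1 hs))),
        if_neg h, zero_mul]
  rw [Finset.sum_congr rfl step3, Finset.sum_ite_eq' T.powerset T (fun _ => g Tᶜ),
    if_pos (mem_powerset_self T)]
end

section
/- Let 𝒩 = {1, …, N}, let R_1, …, R_N ≥ 0, and suppose there exists a permutation π̃ of 𝒩 such that for every nonempty subset S ⊆ 𝒩 the maximum of f^i_S R_i over i ∈ S is attained at the element i_S ∈ S minimizing π̃(i), i.e., f^{i_S}_S R_{i_S} = max_{i∈S} f^i_S R_i where π̃(i_S) = min_{i∈S} π̃(i). Then Σ_{∅ ≠ S ⊆ 𝒩} max_{i∈S} (f^i_S R_i) = Σ_{j=1}^N R_{π̃^{-1}(j)} / (1 − ε_{{π̃^{-1}(1), …, π̃^{-1}(j)}}). -/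
open Finset

section Aux

variable {N : Type*} [Fintype N] [DecidableEq N]

lemma neg_one_sum_aux (U : Finset N) :
    ∑ H ∈ U.powerset, (-1:ℝ)^H.card = if U = ∅ then 1 else 0 := by
  have h := Finset.sum_powerset_neg_one_pow_card (x := U)
  have : ((∑ H ∈ U.powerset, (-1:ℤ)^H.card : ℤ) : ℝ) = ∑ H ∈ U.powerset, (-1:ℝ)^H.card := by
    push_cast; rfl
  rw [← this, h]
  split <;> norm_num

lemma key_aux (c : Finset N → ℝ) (U : Finset N) :
    ∑ T ∈ U.powerset, ∑ H ∈ T.powerset, (-1:ℝ)^H.card * c (Tᶜ ∪ H) = c Uᶜ := by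
  rw [Finset.sum_sigma' U.powerset (fun T => T.powerset) (fun T H => (-1:ℝ)^H.card * c (Tᶜ ∪ H))]
  have step1 : ∑ p ∈ U.powerset.sigma (fun T => T.powerset),
      (-1:ℝ)^p.2.card * c (p.1ᶜ ∪ p.2)
      = ∑ q ∈ U.powerset.sigma (fun H => (U \ H).powerset),
      (-1:ℝ)^q.1.card * c (q.2ᶜ) := by
    refine Finset.sum_nbij' (fun p => ⟨p.2, p.1 \ p.2⟩) (fun q => ⟨q.1 ∪ q.2, q.1⟩) ?_ ?_ ?_ ?_ ?_
    · rintro ⟨T, H⟩ hp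
      simp only [mem_sigma, mem_powerset] at hp ⊢
      exact ⟨hp.2.trans hp.1, sdiff_subset_sdiff hp.1 le_rfl⟩
    · rintro ⟨H, W⟩ hq
      simp only [mem_sigma, mem_powerset, subset_sdiff] at hq ⊢
      exact ⟨union_subset hq.1 hq.2.1, subset_union_left⟩
    · rintro ⟨T, H⟩ hp
      simp only [mem_sigma, mem_powerset] at hp
      simp [Finset.union_sdiff_of_subset hp.2]
    · rintro ⟨H, W⟩ hq
      simp only [mem_sigma, mem_powerset, subset_sdiff] at hq
      simp [Finset.union_sdiff_cancel_left hq.2.2.symm]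
    · rintro ⟨T, H⟩ hp
      simp only [mem_sigma, mem_powerset] at hp
      have : (T \ H)ᶜ = Tᶜ ∪ H := by
        ext x; simp only [mem_compl, mem_sdiff, mem_union]; tauto
      simp [this]
  rw [step1]
  have step2 : ∑ q ∈ U.powerset.sigma (fun H => (U \ H).powerset),
      (-1:ℝ)^q.1.card * c (q.2ᶜ)
      = ∑ q ∈ U.powerset.sigma (fun W => (U \ W).powerset),
      (-1:ℝ)^q.2.card * c (q.1ᶜ) := by
    refine Finset.sum_nbij' (fun q => ⟨q.2, q.1⟩) (fun q => ⟨q.2, q.1⟩) ?_ ?_ ?_ ?_ ?_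
    · rintro ⟨A, B⟩ hq
      simp only [mem_sigma, mem_powerset, subset_sdiff] at hq ⊢
      exact ⟨hq.2.1, hq.1, hq.2.2.symm⟩
    · rintro ⟨A, B⟩ hq
      simp only [mem_sigma, mem_powerset, subset_sdiff] at hq ⊢
      exact ⟨hq.2.1, hq.1, hq.2.2.symm⟩
    · rintro ⟨A, B⟩ _; rfl
    · rintro ⟨A, B⟩ _; rfl
    · rintro ⟨A, B⟩ _; rfl
  rw [step2, ← Finset.sum_sigma' U.powerset (fun W => (U \ W).powerset)
      (fun W H => (-1:ℝ)^H.card * c (Wᶜ))]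
  have : ∀ W ∈ U.powerset, ∑ H ∈ (U \ W).powerset, (-1:ℝ)^H.card * c Wᶜ
      = (if U \ W = ∅ then 1 else 0) * c Wᶜ := by
    intro W _
    rw [← Finset.sum_mul, neg_one_sum_aux]
  rw [Finset.sum_congr rfl this]
  rw [Finset.sum_eq_single U]
  · simp
  · intro W hW hne
    rw [if_neg, zero_mul]
    simp only [mem_powerset] at hW
    rw [Finset.sdiff_eq_empty_iff_subset]
    exact fun h => hne (subset_antisymm hW h)
  · simp

lemma fsum_aux (ε : Finset N → ℝ) (i : N) (U : Finset N) (hi : i ∉ U) :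
    ∑ T ∈ U.powerset, fcoef ε i (insert i T) = 1 / (1 - ε Uᶜ) := by
  have h1 : ∀ T ∈ U.powerset, fcoef ε i (insert i T)
      = ∑ H ∈ T.powerset, (-1:ℝ)^H.card * (fun I => 1 / (1 - ε I)) (Tᶜ ∪ H) := by
    intro T hT
    rw [mem_powerset] at hT
    have hiT : i ∉ T := fun h => hi (hT h)
    unfold fcoef
    rw [Finset.erase_insert hiT]
    refine Finset.sum_congr rfl fun H _ => ?_
    rw [div_eq_mul_one_div]
  rw [Finset.sum_congr rfl h1, key_aux (fun I => 1 / (1 - ε I)) U]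

end Aux

/-- If `R ≥ 0` and there is a permutation `π̃` of `𝒩` such that, for every
nonempty `S ⊆ 𝒩`, the maximum of `f^i_S R_i` over `i ∈ S` is attained at the
element of `S` minimizing `π̃`, then
`∑_{∅ ≠ S ⊆ 𝒩} max_{i∈S} (f^i_S R_i)
  = ∑_{j} R_{π̃⁻¹(j)} / (1 − ε_{{π̃⁻¹(1),…,π̃⁻¹(j)}})`. -/
theorem stmt_13 {n : ℕ} (ε : Finset (Fin n) → ℝ) (hε : ∀ I, ε I ≠ 1)
    (R : Fin n → ℝ) (hR : ∀ i, 0 ≤ R i) (π : Equiv.Perm (Fin n))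
    (hord : ∀ S : Finset (Fin n), S.Nonempty → ∀ iS ∈ S, (∀ j ∈ S, π iS ≤ π j) →
      ∀ i ∈ S, fcoef ε i S * R i ≤ fcoef ε iS S * R iS) :
    ∑ S ∈ ((Finset.univ : Finset (Fin n)).powerset.filter
        (fun S => S.Nonempty)).attach,
        S.1.sup' (Finset.mem_filter.mp S.2).2 (fun i => fcoef ε i S.1 * R i)
      = ∑ j : Fin n, R (π.symm j) / (1 - ε ((Finset.Iic j).image π.symm)) := by
  rcases Nat.eq_zero_or_pos n with h0 | hpos
  · subst h0
    rw [Finset.sum_eq_zero, Finset.sum_eq_zero]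
    · intro j _; exact j.elim0
    · rintro ⟨S, hS⟩ _
      obtain ⟨x, _⟩ := (Finset.mem_filter.mp hS).2
      exact x.elim0
  haveI : NeZero n := ⟨hpos.ne'⟩
  -- the minimizing element of a finset
  set mI : Finset (Fin n) → Fin n :=
    fun S => if h : S.Nonempty then π.symm ((S.image π).min' (h.image π)) else default with hmI
  have hmem : ∀ S : Finset (Fin n), S.Nonempty → mI S ∈ S := by
    intro S h
    rw [hmI]; simp only [dif_pos h]
    obtain ⟨k, hk, hk2⟩ := Finset.mem_image.mp (Finset.min'_mem _ (h.image π))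
    rw [← hk2, Equiv.symm_apply_apply]; exact hk
  have hmin : ∀ S : Finset (Fin n), S.Nonempty → ∀ j ∈ S, π (mI S) ≤ π j := by
    intro S h j hj
    rw [hmI]; simp only [dif_pos h, Equiv.apply_symm_apply]
    exact Finset.min'_le _ _ (Finset.mem_image_of_mem π hj)
  set U : Fin n → Finset (Fin n) :=
    fun i => Finset.univ.filter (fun k => π i < π k) with hU
  have hiU : ∀ i, i ∉ U i := by intro i; simp [hU]
  -- Step A : replace the sup' by the value at the minimizer
  have stepA : ∑ S ∈ ((Finset.univ : Finset (Fin n)).powerset.filter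
        (fun S => S.Nonempty)).attach,
        S.1.sup' (Finset.mem_filter.mp S.2).2 (fun i => fcoef ε i S.1 * R i)
      = ∑ S ∈ (Finset.univ : Finset (Fin n)).powerset.filter (fun S => S.Nonempty),
        fcoef ε (mI S) S * R (mI S) := by
    rw [← Finset.sum_attach ((Finset.univ : Finset (Fin n)).powerset.filter (fun S => S.Nonempty))
      (fun S => fcoef ε (mI S) S * R (mI S))]
    refine Finset.sum_congr rfl fun ⟨S, hS⟩ _ => ?_
    have h : S.Nonempty := (Finset.mem_filter.mp hS).2
    refine le_antisymm ?_ ?_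
    · exact Finset.sup'_le _ _ (hord S h (mI S) (hmem S h) (hmin S h))
    · exact Finset.le_sup' (fun i => fcoef ε i S * R i) (hmem S h)
  rw [stepA]
  -- Step B : reindex by (minimizer, rest)
  have stepB : ∑ S ∈ (Finset.univ : Finset (Fin n)).powerset.filter (fun S => S.Nonempty),
        fcoef ε (mI S) S * R (mI S)
      = ∑ p ∈ (Finset.univ : Finset (Fin n)).sigma (fun i => (U i).powerset),
        fcoef ε p.1 (insert p.1 p.2) * R p.1 := by
    refine Finset.sum_nbij' (fun S => ⟨mI S, S.erase (mI S)⟩)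
      (fun p => insert p.1 p.2) ?_ ?_ ?_ ?_ ?_
    · intro S hS
      have h : S.Nonempty := (Finset.mem_filter.mp hS).2
      simp only [Finset.mem_sigma, Finset.mem_univ, Finset.mem_powerset, true_and]
      intro k hk
      rw [Finset.mem_erase] at hk
      rw [hU]
      simp only [Finset.mem_filter, Finset.mem_univ, true_and]
      exact lt_of_le_of_ne (hmin S h k hk.2)
        (fun hc => hk.1 (π.injective hc.symm))
    · rintro ⟨i, T⟩ _
      simp only [Finset.mem_filter, Finset.mem_powerset]
      exact ⟨Finset.subset_univ _, Finset.insert_nonempty _ _⟩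
    · intro S hS
      have h : S.Nonempty := (Finset.mem_filter.mp hS).2
      simp only
      exact Finset.insert_erase (hmem S h)
    · rintro ⟨i, T⟩ hp
      simp only [Finset.mem_sigma, Finset.mem_univ, Finset.mem_powerset, true_and] at hp
      have hiT : i ∉ T := fun hc => hiU i (hp hc)
      have hm : mI (insert i T) = i := by
        have hne : (insert i T).Nonempty := Finset.insert_nonempty _ _
        rw [hmI]; simp only [dif_pos hne]
        have : ((insert i T).image π).min' (hne.image π) = π i := by
          refine le_antisymm (Finset.min'_le _ _ (Finset.mem_image_of_mem π (Finset.mem_insert_self i T))) ?_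
          refine Finset.le_min' _ _ _ ?_
          intro y hy
          obtain ⟨k, hk, rfl⟩ := Finset.mem_image.mp hy
          rcases Finset.mem_insert.mp hk with rfl | hk
          · exact le_rfl
          · have := hp hk
            rw [hU] at this
            simp only [Finset.mem_filter, Finset.mem_univ, true_and] at this
            exact this.le
        rw [this, Equiv.symm_apply_apply]
      simp only [hm]
      exact Sigma.ext rfl (heq_of_eq (Finset.erase_insert hiT))
    · intro S hS
      have h : S.Nonempty := (Finset.mem_filter.mp hS).2
      simp only
      rw [Finset.insert_erase (hmem S h)]
  rw [stepB, ← Finset.sum_sigma' (Finset.univ : Finset (Fin n)) (fun i => (U i).powerset)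
    (fun i T => fcoef ε i (insert i T) * R i)]
  -- Step C : evaluate the inner sums
  have stepC : ∀ i : Fin n, ∑ T ∈ (U i).powerset, fcoef ε i (insert i T) * R i
      = R i / (1 - ε (U i)ᶜ) := by
    intro i
    rw [← Finset.sum_mul, fsum_aux ε i (U i) (hiU i), one_div, div_eq_mul_inv, mul_comm]
  rw [Finset.sum_congr rfl (fun i _ => stepC i)]
  -- Step D : reindex the RHS
  rw [← Equiv.sum_comp π (fun j => R (π.symm j) / (1 - ε ((Finset.Iic j).image π.symm)))]
  refine Finset.sum_congr rfl fun i _ => ?_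
  have himg : (Finset.Iic (π i)).image π.symm = (U i)ᶜ := by
    ext k
    simp only [Finset.mem_image, Finset.mem_Iic, Finset.mem_compl, hU, Finset.mem_filter,
      Finset.mem_univ, true_and, not_lt]
    constructor
    · rintro ⟨j, hj, rfl⟩; simpa using hj
    · intro hk; exact ⟨π k, hk, π.symm_apply_apply k⟩
  rw [himg, Equiv.symm_apply_apply]
end

section
/- Suppose the channel is symmetric, i.e., there exist real numbers ε̃_0, …, ε̃_N with ε̃_k ≠ 1 for all k such that ε_I = ε̃_{|I|} for every subset I ⊆ 𝒩. Then for every subset S ⊆ 𝒩 and every i ∈ S, f^i_S = Σ_{m=0}^{|S|−1} C(|S|−1, m) (−1)^{|S|−1−m} / (1 − ε̃_{N−m}), where C(·,·) denotes the binomial coefficient; in particular, f^i_S does not depend on the choice of i ∈ S. -/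
open Finset

lemma fcoef_eq {N : Type*} [Fintype N] [DecidableEq N]
    (ε : Finset N → ℝ) (εt : ℕ → ℝ)
    (hsym : ∀ I : Finset N, ε I = εt I.card)
    (S : Finset N) (i : N) (hi : i ∈ S) :
    fcoef ε i S = ∑ m ∈ Finset.range S.card,
        ((S.card - 1).choose m : ℝ) * (-1 : ℝ) ^ (S.card - 1 - m)
          / (1 - εt (Fintype.card N - m)) := by
  set n := Fintype.card N
  set s := S.card with hs
  have hs1 : (S.erase i).card = s - 1 := Finset.card_erase_of_mem hi
  have hsn : s ≤ n := S.card_le_univ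
  have hspos : 1 ≤ s := Finset.card_pos.mpr ⟨i, hi⟩
  have step1 : fcoef ε i S =
      ∑ H ∈ (S.erase i).powerset, (-1 : ℝ) ^ H.card / (1 - εt (n - (s - 1) + H.card)) := by
    unfold fcoef
    refine Finset.sum_congr rfl fun H hH => ?_
    rw [hsym]
    congr 2
    rw [Finset.card_union_of_disjoint
      (disjoint_compl_left.mono_right (Finset.mem_powerset.mp hH)),
      Finset.card_compl, hs1]
  rw [step1, Finset.sum_powerset]
  have : ∀ j ∈ Finset.range ((S.erase i).card + 1),
      (∑ H ∈ Finset.powersetCard j (S.erase i),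
        (-1 : ℝ) ^ H.card / (1 - εt (n - (s - 1) + H.card))) =
      ((s - 1).choose j : ℝ) * ((-1 : ℝ) ^ j / (1 - εt (n - (s - 1) + j))) := by
    intro j _
    rw [Finset.sum_congr rfl (fun H hH => by
      rw [(Finset.mem_powersetCard.mp hH).2]), Finset.sum_const,
      Finset.card_powersetCard, hs1, nsmul_eq_mul]
  rw [Finset.sum_congr rfl this, hs1, Nat.sub_add_cancel hspos,
    ← Finset.sum_range_reflect
      (fun m => ((s - 1).choose m : ℝ) * (-1 : ℝ) ^ (s - 1 - m) / (1 - εt (n - m))) s]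
  refine Finset.sum_congr rfl fun m hm => ?_
  have hm' : m < s := Finset.mem_range.mp hm
  have h1 : s - 1 - (s - 1 - m) = m := by omega
  have h2 : n - (s - 1 - m) = n - (s - 1) + m := by omega
  have h3 : (s - 1).choose (s - 1 - m) = (s - 1).choose m :=
    Nat.choose_symm (by omega)
  simp only [h1, h2, h3, mul_div_assoc]

/-- For a symmetric channel (`ε_I = ε̃_{|I|}`),
`f^i_S = ∑_{m=0}^{|S|−1} C(|S|−1, m) (−1)^{|S|−1−m} / (1 − ε̃_{N−m})`;
in particular `f^i_S` does not depend on the choice of `i ∈ S`. -/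
theorem stmt_14 {N : Type*} [Fintype N] [DecidableEq N]
    (ε : Finset N → ℝ) (εt : ℕ → ℝ) (hεt : ∀ k, εt k ≠ 1)
    (hsym : ∀ I : Finset N, ε I = εt I.card) :
    ∀ S : Finset N, ∀ i ∈ S,
      (fcoef ε i S = ∑ m ∈ Finset.range S.card,
          ((S.card - 1).choose m : ℝ) * (-1 : ℝ) ^ (S.card - 1 - m)
            / (1 - εt (Fintype.card N - m)))
      ∧ ∀ j ∈ S, fcoef ε i S = fcoef ε j S := by
  intro S i hi
  refine ⟨fcoef_eq ε εt hsym S i hi, fun j hj => ?_⟩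
  rw [fcoef_eq ε εt hsym S i hi, fcoef_eq ε εt hsym S j hj]
end

section
/- Suppose the channel is spatially independent: for each j ∈ 𝒩 a real number ε_j ∈ [0,1) is given and ε_I := ∏_{j∈I} ε_j for every subset I ⊆ 𝒩 (so every subset appearing in the denominators of f contains an element of 𝒩, making those denominators positive). Then for every subset S ⊆ 𝒩 and all i, m ∈ S with ε_m ≥ ε_i, it holds that ε_i f^m_S ≥ ε_m f^i_S. -/
open Finset

lemma aux_prod_lt_one {N : Type*} [Fintype N] [DecidableEq N]
    (εi : N → ℝ) (h0 : ∀ j, 0 ≤ εi j) (h1 : ∀ j, εi j < 1)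
    {T : Finset N} {i : N} (hi : i ∈ T) : ∏ j ∈ T, εi j < 1 := by
  calc ∏ j ∈ T, εi j = εi i * ∏ j ∈ T.erase i, εi j := (Finset.mul_prod_erase T εi hi).symm
    _ ≤ εi i * 1 := by
        refine mul_le_mul_of_nonneg_left ?_ (h0 i)
        exact Finset.prod_le_one (fun j _ => h0 j) (fun j _ => (h1 j).le)
    _ = εi i := mul_one _
    _ < 1 := h1 i

lemma aux_summable {N : Type*} [Fintype N] [DecidableEq N]
    (εi : N → ℝ) (h0 : ∀ j, 0 ≤ εi j) (h1 : ∀ j, εi j < 1)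
    {a : ℝ} (ha0 : 0 ≤ a) (ha1 : a < 1) (T : Finset N) :
    Summable (fun k : ℕ => a ^ k * ∏ j ∈ T, (1 - εi j ^ k)) := by
  refine Summable.of_nonneg_of_le (fun k => ?_) (fun k => ?_)
    (summable_geometric_of_lt_one ha0 ha1)
  · refine mul_nonneg (pow_nonneg ha0 k) (Finset.prod_nonneg fun j _ => ?_)
    have := pow_le_one₀ (h0 j) (h1 j).le (n := k)
    linarith
  · have : ∏ j ∈ T, (1 - εi j ^ k) ≤ 1 := by
      refine Finset.prod_le_one (fun j _ => ?_) (fun j _ => ?_)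
      · have := pow_le_one₀ (h0 j) (h1 j).le (n := k); linarith
      · have := pow_nonneg (h0 j) k; linarith
    calc a ^ k * ∏ j ∈ T, (1 - εi j ^ k) ≤ a ^ k * 1 :=
          mul_le_mul_of_nonneg_left this (pow_nonneg ha0 k)
      _ = a ^ k := mul_one _

lemma fcoef_eq_s15 {N : Type*} [Fintype N] [DecidableEq N]
    (εi : N → ℝ) (h0 : ∀ j, 0 ≤ εi j) (h1 : ∀ j, εi j < 1)
    (i : N) (S : Finset N) :
    fcoef (fun I => ∏ j ∈ I, εi j) i S
      = ∑' k : ℕ, (∏ j ∈ (S.erase i)ᶜ, εi j) ^ k * ∏ j ∈ S.erase i, (1 - εi j ^ k) := by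
  set a := ∏ j ∈ (S.erase i)ᶜ, εi j with ha
  have hia : i ∈ (S.erase i)ᶜ := by simp
  have ha0 : 0 ≤ a := Finset.prod_nonneg fun j _ => h0 j
  have ha1 : a < 1 := aux_prod_lt_one εi h0 h1 hia
  have hx : ∀ H ∈ (S.erase i).powerset,
      (∏ j ∈ (S.erase i)ᶜ ∪ H, εi j) = a * ∏ j ∈ H, εi j := by
    intro H hH
    rw [Finset.mem_powerset] at hH
    exact Finset.prod_union (disjoint_compl_left.mono_right hH)
  have hp0 : ∀ H : Finset N, (0:ℝ) ≤ ∏ j ∈ H, εi j :=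
    fun H => Finset.prod_nonneg fun j _ => h0 j
  have hp1 : ∀ H : Finset N, (∏ j ∈ H, εi j) ≤ 1 :=
    fun H => Finset.prod_le_one (fun j _ => h0 j) (fun j _ => (h1 j).le)
  have hx0 : ∀ H : Finset N, (0:ℝ) ≤ a * ∏ j ∈ H, εi j :=
    fun H => mul_nonneg ha0 (hp0 H)
  have hx1 : ∀ H : Finset N, a * ∏ j ∈ H, εi j < 1 := fun H =>
    lt_of_le_of_lt (mul_le_of_le_one_right ha0 (hp1 H)) ha1
  calc fcoef (fun I => ∏ j ∈ I, εi j) i S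
      = ∑ H ∈ (S.erase i).powerset,
          ∑' k : ℕ, (-1:ℝ) ^ H.card * (a * ∏ j ∈ H, εi j) ^ k := by
        refine Finset.sum_congr rfl fun H hH => ?_
        rw [tsum_mul_left, tsum_geometric_of_lt_one (hx0 H) (hx1 H)]
        simp only [fcoef, div_eq_mul_inv]
        rw [hx H hH]
    _ = ∑' k : ℕ, ∑ H ∈ (S.erase i).powerset,
          (-1:ℝ) ^ H.card * (a * ∏ j ∈ H, εi j) ^ k := by
        refine (Summable.tsum_finsetSum fun H hH => ?_).symm
        exact ((summable_geometric_of_lt_one (hx0 H) (hx1 H)).mul_left _)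
    _ = ∑' k : ℕ, a ^ k * ∏ j ∈ S.erase i, (1 - εi j ^ k) := by
        refine tsum_congr fun k => ?_
        have hprod := Finset.prod_add (fun j => -(εi j ^ k)) (fun _ => (1:ℝ)) (S.erase i)
        have hl : ∏ j ∈ S.erase i, (-(εi j ^ k) + 1) = ∏ j ∈ S.erase i, (1 - εi j ^ k) := by
          refine Finset.prod_congr rfl fun j _ => by ring
        rw [← hl, hprod, Finset.mul_sum]
        refine Finset.sum_congr rfl fun H hH => ?_
        have hneg : ∏ j ∈ H, -(εi j ^ k) = (-1:ℝ) ^ H.card * ∏ j ∈ H, εi j ^ k := by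
          calc ∏ j ∈ H, -(εi j ^ k) = ∏ j ∈ H, ((-1:ℝ) * εi j ^ k) := by
                refine Finset.prod_congr rfl fun j _ => by ring
            _ = (∏ _j ∈ H, (-1:ℝ)) * ∏ j ∈ H, εi j ^ k := Finset.prod_mul_distrib
            _ = (-1:ℝ) ^ H.card * ∏ j ∈ H, εi j ^ k := by rw [Finset.prod_const]
        rw [hneg, Finset.prod_const_one, mul_one, mul_pow, Finset.prod_pow]
        ring

/-- For a spatially independent channel (`ε_I = ∏_{j∈I} ε_j` with `ε_j ∈ [0,1)`),
for every `S ⊆ 𝒩` and all `i, m ∈ S` with `ε_m ≥ ε_i`, it holds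
`ε_i f^m_S ≥ ε_m f^i_S`. -/
theorem stmt_15 {N : Type*} [Fintype N] [DecidableEq N]
    (εi : N → ℝ) (h0 : ∀ j, 0 ≤ εi j) (h1 : ∀ j, εi j < 1)
    (S : Finset N) (i m : N) (hi : i ∈ S) (hm : m ∈ S) (hcmp : εi i ≤ εi m) :
    εi m * fcoef (fun I => ∏ j ∈ I, εi j) i S
      ≤ εi i * fcoef (fun I => ∏ j ∈ I, εi j) m S := by
  rcases eq_or_ne i m with rfl | hne
  · exact le_rfl
  set c := ∏ j ∈ Sᶜ, εi j with hc
  have hc0 : 0 ≤ c := Finset.prod_nonneg fun j _ => h0 j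
  have hc1 : c ≤ 1 := Finset.prod_le_one (fun j _ => h0 j) (fun j _ => (h1 j).le)
  -- compute complements
  have hcompl : ∀ x ∈ S, (S.erase x)ᶜ = insert x Sᶜ := by
    intro x hx
    ext y
    by_cases hxy : y = x <;> simp [Finset.mem_erase, hxy, hx]
  have haI : ∀ x ∈ S, ∏ j ∈ (S.erase x)ᶜ, εi j = εi x * c := by
    intro x hx
    rw [hcompl x hx, Finset.prod_insert (by simp [hx])]
  have ha0 : ∀ x, 0 ≤ εi x * c := fun x => mul_nonneg (h0 x) hc0
  have ha1 : ∀ x, εi x * c < 1 := fun x =>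
    lt_of_le_of_lt (mul_le_of_le_one_right (h0 x) hc1) (h1 x)
  rw [fcoef_eq_s15 εi h0 h1 i S, fcoef_eq_s15 εi h0 h1 m S, haI i hi, haI m hm,
    ← tsum_mul_left, ← tsum_mul_left]
  have hmi : m ∈ S.erase i := Finset.mem_erase.2 ⟨Ne.symm hne, hm⟩
  have him : i ∈ S.erase m := Finset.mem_erase.2 ⟨hne, hi⟩
  refine Summable.tsum_le_tsum (fun k => ?_)
    ((aux_summable εi h0 h1 (ha0 i) (ha1 i) (S.erase i)).mul_left _)
    ((aux_summable εi h0 h1 (ha0 m) (ha1 m) (S.erase m)).mul_left _)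
  have hPi : ∏ j ∈ S.erase i, (1 - εi j ^ k)
      = (1 - εi m ^ k) * ∏ j ∈ (S.erase i).erase m, (1 - εi j ^ k) :=
    (Finset.mul_prod_erase _ _ hmi).symm
  have hPm : ∏ j ∈ S.erase m, (1 - εi j ^ k)
      = (1 - εi i ^ k) * ∏ j ∈ (S.erase i).erase m, (1 - εi j ^ k) := by
    rw [← Finset.mul_prod_erase (S.erase m) _ him, Finset.erase_right_comm]
  have hQ0 : 0 ≤ ∏ j ∈ (S.erase i).erase m, (1 - εi j ^ k) := by
    refine Finset.prod_nonneg fun j _ => ?_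
    have := pow_le_one₀ (h0 j) (h1 j).le (n := k); linarith
  set Q := ∏ j ∈ (S.erase i).erase m, (1 - εi j ^ k)
  have key : εi m * εi i ^ k * (1 - εi m ^ k) ≤ εi i * εi m ^ k * (1 - εi i ^ k) := by
    cases k with
    | zero => simp
    | succ n =>
      have h1' : εi i ^ n ≤ εi m ^ n := pow_le_pow_left₀ (h0 i) hcmp n
      have h2 : 0 ≤ εi i ^ n := pow_nonneg (h0 i) n
      have h3 : 0 ≤ εi m ^ n := pow_nonneg (h0 m) n
      have h4 : εi i ^ (n+1) ≤ 1 := pow_le_one₀ (h0 i) (h1 i).le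
      have h5 : εi m ^ (n+1) ≤ 1 := pow_le_one₀ (h0 m) (h1 m).le
      have h6 : 0 ≤ εi i := h0 i
      have h7 : 0 ≤ εi m := h0 m
      have hA : εi m * εi i ^ (n+1) ≤ εi i * εi m ^ (n+1) := by
        have h := mul_le_mul_of_nonneg_left h1' (mul_nonneg h6 h7)
        calc εi m * εi i ^ (n+1) = εi i * εi m * εi i ^ n := by ring
          _ ≤ εi i * εi m * εi m ^ n := h
          _ = εi i * εi m ^ (n+1) := by ring
      have hC : εi i * (εi i ^ (n+1) * εi m ^ (n+1)) ≤ εi m * (εi i ^ (n+1) * εi m ^ (n+1)) :=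
        mul_le_mul_of_nonneg_right hcmp (mul_nonneg (pow_nonneg h6 _) (pow_nonneg h7 _))
      nlinarith [hA, hC]
  have hck : (0:ℝ) ≤ c ^ k := pow_nonneg hc0 k
  calc εi m * ((εi i * c) ^ k * ∏ j ∈ S.erase i, (1 - εi j ^ k))
      = (εi m * εi i ^ k * (1 - εi m ^ k)) * (c ^ k * Q) := by
        rw [hPi, mul_pow]; ring
    _ ≤ (εi i * εi m ^ k * (1 - εi i ^ k)) * (c ^ k * Q) :=
        mul_le_mul_of_nonneg_right key (mul_nonneg hck hQ0)
    _ = εi i * ((εi m * c) ^ k * ∏ j ∈ S.erase m, (1 - εi j ^ k)) := by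
        rw [hPm, mul_pow]; ring
end
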